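/- Let D = ⋃_{a ∈ {0,1}ⁿ} T_a ⊆ ℝ^{2n−1} (the model region of the tree-structured formula Δ, whose leaf clauses are the disjunctions of the two literals for each leaf). Then for every Lebesgue-measurable set Q ⊆ ℝ^{2n−1}, the volume of D ∩ Q equals ∑_{a ∈ {0,1}ⁿ} volume(T_a ∩ Q); in particular, the volume of D equals 2ⁿ·(1/(2n))^{2n−1}. -/

import Mathlib

open MeasureTheory
open scoped ENNReal

noncomputable section

/-- The value `a_{m−n+1} s_{m−n+1}` carried by a leaf of the heap-indexed binary tree
(0-based: index `j` is a leaf when `n − 1 ≤ j`, carrying `s_{j−(n−1)}`); the value is `0`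
on internal nodes. -/
def leafWeight (n : ℕ) (s : Fin n → ℕ) (a : Fin n → Bool) (j : Fin (2 * n - 1)) : ℝ :=
  if _ : n - 1 ≤ (j : ℕ) then
    (if a ⟨(j : ℕ) - (n - 1), by have := j.isLt; omega⟩ then
      (s ⟨(j : ℕ) - (n - 1), by have := j.isLt; omega⟩ : ℝ) else 0)
  else 0

/-- The tree region `T_a ⊆ ℝ^{2n−1}` : coordinates are indexed in heap order (0-based:
node `j` is internal when `j < n − 1`, with children `2j+1` and `2j+2`; the nodes
`n − 1 ≤ j` are leaves). A point `x` lies in `T_a` iff for every leaf `j`,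
`a_j s_j − 1/(4n) < x_j < a_j s_j + 1/(4n)`, and for every internal node `j`,
`x_{2j+1} + x_{2j+2} − 1/(4n) < x_j < x_{2j+1} + x_{2j+2} + 1/(4n)`. -/
def treeRegion (n : ℕ) (s : Fin n → ℕ) (a : Fin n → Bool) : Set (Fin (2 * n - 1) → ℝ) :=
  {x | (∀ j : Fin (2 * n - 1), n - 1 ≤ (j : ℕ) →
          (leafWeight n s a j - 1 / (4 * (n : ℝ)) < x j ∧
           x j < leafWeight n s a j + 1 / (4 * (n : ℝ)))) ∧
       (∀ j : Fin (2 * n - 1), ∀ h : (j : ℕ) < n - 1,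
          (x ⟨2 * (j : ℕ) + 1, by omega⟩ + x ⟨2 * (j : ℕ) + 2, by omega⟩ - 1 / (4 * (n : ℝ))
              < x j ∧
           x j < x ⟨2 * (j : ℕ) + 1, by omega⟩ + x ⟨2 * (j : ℕ) + 2, by omega⟩
              + 1 / (4 * (n : ℝ))))}

set_option linter.unnecessarySeqFocus false

def treeMap (n : ℕ) : (Fin (2 * n - 1) → ℝ) →ₗ[ℝ] (Fin (2 * n - 1) → ℝ) where
  toFun x := fun j => if h : (j : ℕ) < n - 1 then
      x j - x ⟨2 * (j : ℕ) + 1, by have := j.isLt; omega⟩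
          - x ⟨2 * (j : ℕ) + 2, by have := j.isLt; omega⟩ else x j
  map_add' x y := by
    funext j; by_cases h : (j : ℕ) < n - 1 <;> simp [h] <;> ring
  map_smul' c x := by
    funext j; by_cases h : (j : ℕ) < n - 1 <;> simp [h] <;> ring

lemma treeMap_apply (n : ℕ) (x : Fin (2 * n - 1) → ℝ) (j : Fin (2 * n - 1)) :
    treeMap n x j = if h : (j : ℕ) < n - 1 then
      x j - x ⟨2 * (j : ℕ) + 1, by have := j.isLt; omega⟩
          - x ⟨2 * (j : ℕ) + 2, by have := j.isLt; omega⟩ else x j := rfl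

lemma treeMap_det (n : ℕ) : LinearMap.det (treeMap n) = 1 := by
  rw [← LinearMap.det_toMatrix', Matrix.det_of_upperTriangular]
  · apply Finset.prod_eq_one
    intro i _
    have hi := i.isLt
    rw [LinearMap.toMatrix'_apply, treeMap_apply]
    by_cases h : (i : ℕ) < n - 1
    · rw [dif_pos h, Pi.single_eq_same,
        Pi.single_eq_of_ne (fun e => by have := congrArg Fin.val e; simp at this; omega),
        Pi.single_eq_of_ne (fun e => by have := congrArg Fin.val e; simp at this; omega)]
      ring
    · rw [dif_neg h, Pi.single_eq_same]
  · intro i j hij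
    have hij' : (j : ℕ) < (i : ℕ) := hij
    have hi := i.isLt
    rw [LinearMap.toMatrix'_apply, treeMap_apply]
    have e0 : ¬ (i = j) := fun e => by
      have := congrArg Fin.val e; omega
    by_cases h : (i : ℕ) < n - 1
    · rw [dif_pos h, Pi.single_eq_of_ne e0,
        Pi.single_eq_of_ne (fun e => by have := congrArg Fin.val e; simp at this; omega),
        Pi.single_eq_of_ne (fun e => by have := congrArg Fin.val e; simp at this; omega)]
      ring
    · rw [dif_neg h, Pi.single_eq_of_ne e0]

lemma leafWeight_internal (n : ℕ) (s : Fin n → ℕ) (a : Fin n → Bool)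
    (j : Fin (2 * n - 1)) (h : (j : ℕ) < n - 1) : leafWeight n s a j = 0 :=
  dif_neg (by omega)

lemma treeRegion_eq (n : ℕ) (s : Fin n → ℕ) (a : Fin n → Bool) :
    treeRegion n s a = treeMap n ⁻¹'
      (Set.univ.pi fun j => Set.Ioo (leafWeight n s a j - 1 / (4 * (n : ℝ)))
        (leafWeight n s a j + 1 / (4 * (n : ℝ)))) := by
  ext x
  simp only [treeRegion, Set.mem_setOf_eq, Set.mem_preimage, Set.mem_pi, Set.mem_univ,
    forall_true_left, Set.mem_Ioo, treeMap_apply]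
  constructor
  · rintro ⟨h1, h2⟩ j
    by_cases h : (j : ℕ) < n - 1
    · rw [dif_pos h, leafWeight_internal n s a j h]
      obtain ⟨c1, c2⟩ := h2 j h
      constructor <;> [linarith; linarith]
    · rw [dif_neg h]
      exact h1 j (by omega)
  · intro hx
    constructor
    · intro j hj
      have := hx j
      rw [dif_neg (by omega)] at this
      exact this
    · intro j hj
      have := hx j
      rw [dif_pos hj, leafWeight_internal n s a j hj] at this
      obtain ⟨c1, c2⟩ := this
      constructor <;> [linarith; linarith]

lemma measurableSet_treeRegion (n : ℕ) (s : Fin n → ℕ) (a : Fin n → Bool) :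
    MeasurableSet (treeRegion n s a) := by
  rw [treeRegion_eq]
  exact ((treeMap n).continuous_of_finiteDimensional).measurable
    (MeasurableSet.univ_pi fun j => measurableSet_Ioo)

lemma volume_treeRegion (n : ℕ) (hn : 1 ≤ n) (s : Fin n → ℕ) (a : Fin n → Bool) :
    volume (treeRegion n s a) = ENNReal.ofReal (1 / (2 * (n : ℝ))) ^ (2 * n - 1) := by
  have hdet := treeMap_det n
  rw [treeRegion_eq, Measure.addHaar_preimage_linearMap volume (by rw [hdet]; norm_num)]
  rw [hdet, volume_pi_pi]
  have hlen : ∀ j : Fin (2 * n - 1),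
      (leafWeight n s a j + 1 / (4 * (n : ℝ))) - (leafWeight n s a j - 1 / (4 * (n : ℝ)))
        = 1 / (2 * (n : ℝ)) := by
    intro j
    have hn' : (0:ℝ) < n := by exact_mod_cast hn
    field_simp
    ring
  simp only [Real.volume_Ioo, hlen]
  rw [Finset.prod_const, Finset.card_univ, Fintype.card_fin]
  norm_num

lemma leafWeight_leaf (n : ℕ) (s : Fin n → ℕ) (a : Fin n → Bool) (i : Fin n)
    (h : n - 1 + (i : ℕ) < 2 * n - 1) :
    leafWeight n s a ⟨n - 1 + (i : ℕ), h⟩ = if a i then (s i : ℝ) else 0 := by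
  rw [leafWeight, dif_pos (by simp)]
  simp only [show n - 1 + (i : ℕ) - (n - 1) = (i : ℕ) from by omega, Fin.eta]

lemma treeRegion_disjoint (n : ℕ) (hn : 1 ≤ n) (s : Fin n → ℕ) (hs : ∀ i, 0 < s i) :
    Pairwise (Function.onFun Disjoint fun a : Fin n → Bool => treeRegion n s a) := by
  intro a b hab
  simp only [Function.onFun]
  rw [Set.disjoint_left]
  intro x hxa hxb
  obtain ⟨i, hi⟩ : ∃ i, a i ≠ b i := by
    by_contra hc; push_neg at hc; exact hab (funext hc)
  have hj : n - 1 + (i : ℕ) < 2 * n - 1 := by have := i.isLt; omega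
  have hj1 : n - 1 ≤ ((⟨n - 1 + (i : ℕ), hj⟩ : Fin (2 * n - 1)) : ℕ) := Nat.le_add_right _ _
  have ha := hxa.1 ⟨n - 1 + (i : ℕ), hj⟩ hj1
  have hb := hxb.1 ⟨n - 1 + (i : ℕ), hj⟩ hj1
  rw [leafWeight_leaf n s a i hj] at ha
  rw [leafWeight_leaf n s b i hj] at hb
  have hε : ((n : ℝ))⁻¹ * 4⁻¹ ≤ 1 / 4 := by
    have h1 : (1 : ℝ) ≤ n := by exact_mod_cast hn
    have h2 : ((n : ℝ))⁻¹ ≤ 1 := by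
      rw [inv_le_one₀ (by linarith)]; exact h1
    linarith
  have hsi : (1 : ℝ) ≤ s i := by exact_mod_cast hs i
  cases hai : a i <;> cases hbi : b i <;> simp [hai, hbi] at ha hb hi
  · linarith [ha.1, ha.2, hb.1, hb.2]
  · linarith [ha.1, ha.2, hb.1, hb.2]

/-- let `D = ⋃_{a ∈ {0,1}ⁿ} T_a ⊆ ℝ^{2n−1}` be the model region of the
tree-structured formula. For every Lebesgue-measurable `Q`,
`volume (D ∩ Q) = ∑_a volume (T_a ∩ Q)`; in particular
`volume D = 2ⁿ · (1/(2n))^{2n−1}`. -/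
theorem treeRegion_union_volume (k : ℕ) (hk : 1 ≤ k) (n : ℕ) (hn : n = 2 ^ k)
    (s : Fin n → ℕ) (hs : ∀ i, 0 < s i) :
    (∀ Q : Set (Fin (2 * n - 1) → ℝ), MeasurableSet Q →
      volume ((⋃ a : Fin n → Bool, treeRegion n s a) ∩ Q)
        = ∑ a : Fin n → Bool, volume (treeRegion n s a ∩ Q)) ∧
    volume (⋃ a : Fin n → Bool, treeRegion n s a)
      = 2 ^ n * (1 / (2 * (n : ℝ≥0∞))) ^ (2 * n - 1) := by
  have hn1 : 1 ≤ n := by subst hn; exact Nat.one_le_two_pow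
  have hmeas := measurableSet_treeRegion n s
  have hdisj := treeRegion_disjoint n hn1 s hs
  constructor
  · intro Q hQ
    rw [Set.iUnion_inter, measure_iUnion ?_ (fun a => (hmeas a).inter hQ), tsum_fintype]
    intro a b hab
    exact ((hdisj hab).mono Set.inter_subset_left Set.inter_subset_left)
  · rw [measure_iUnion hdisj hmeas, tsum_fintype]
    simp only [volume_treeRegion n hn1 s]
    rw [Finset.sum_const, Finset.card_univ]
    have hcard : Fintype.card (Fin n → Bool) = 2 ^ n := by simp
    rw [hcard, nsmul_eq_mul]
    have hofr : ENNReal.ofReal (1 / (2 * (n : ℝ))) = 1 / (2 * (n : ℝ≥0∞)) := by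
      have hnp : (0 : ℝ) < 2 * n := by
        have : (1 : ℝ) ≤ n := by exact_mod_cast hn1
        linarith
      rw [ENNReal.ofReal_div_of_pos hnp, ENNReal.ofReal_one,
        ENNReal.ofReal_mul (by norm_num), ENNReal.ofReal_ofNat, ENNReal.ofReal_natCast]
    rw [hofr]
    push_cast
    ring
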